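/- Let X be a topological space and A a nonempty nowhere dense perfect subset of X that is locally compact (in its subspace topology). Then T'(X) is not contained in B₁(X); in particular there exists f : X → ℝ continuous on a dense open subset of X that is not a Baire one function. -/

import Mathlib

open Filter Topology

def IsBaireOne {X : Type*} [TopologicalSpace X] (f : X → ℝ) : Prop :=
  ∃ F : ℕ → X → ℝ, (∀ n, Continuous (F n)) ∧
    ∀ x, Filter.Tendsto (fun n => F n x) Filter.atTop (nhds (f x))

def B1 (X : Type*) [TopologicalSpace X] : Subring (X → ℝ) where
  carrier := {f | IsBaireOne f}
  zero_mem' := ⟨fun _ _ => 0, fun _ => continuous_const, fun _ => tendsto_const_nhds⟩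
  one_mem' := ⟨fun _ _ => 1, fun _ => continuous_const, fun _ => tendsto_const_nhds⟩
  add_mem' := by
    rintro f g ⟨F, hF, hFf⟩ ⟨G, hG, hGg⟩
    exact ⟨fun n => F n + G n, fun n => (hF n).add (hG n), fun x => (hFf x).add (hGg x)⟩
  mul_mem' := by
    rintro f g ⟨F, hF, hFf⟩ ⟨G, hG, hGg⟩
    exact ⟨fun n => F n * G n, fun n => (hF n).mul (hG n), fun x => (hFf x).mul (hGg x)⟩
  neg_mem' := by
    rintro f ⟨F, hF, hFf⟩
    exact ⟨fun n => -F n, fun n => (hF n).neg, fun x => (hFf x).neg⟩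

def zset {X : Type*} [TopologicalSpace X] (f : ↥(B1 X)) : Set X := {x | (f : X → ℝ) x = 0}

noncomputable def chi {X : Type*} (p : X) : X → ℝ := Set.indicator {p} (fun _ => 1)

def IsFsigma {X : Type*} [TopologicalSpace X] (s : Set X) : Prop :=
  ∃ c : ℕ → Set X, (∀ n, IsClosed (c n)) ∧ s = ⋃ n, c n


lemma exists_continuousAt_of_isBaireOne {Y : Type*} [TopologicalSpace Y] [BaireSpace Y]
    [Nonempty Y] {f : Y → ℝ} (hf : IsBaireOne f) : ∃ x, ContinuousAt f x := by
  obtain ⟨F, hFc, hFt⟩ := hf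
  set A : ℕ → ℕ → Set Y := fun k n =>
    {x | ∀ p q, n ≤ p → n ≤ q → dist (F p x) (F q x) ≤ 1 / (k + 1)} with hA
  have hAclosed : ∀ k n, IsClosed (A k n) := by
    intro k n
    have : A k n = ⋂ (p) (q) (_ : n ≤ p) (_ : n ≤ q),
        (fun x => dist (F p x) (F q x)) ⁻¹' Set.Iic (1 / (k + 1 : ℝ)) := by
      ext x; simp [hA]
    rw [this]
    exact isClosed_iInter fun p => isClosed_iInter fun q => isClosed_iInter fun _ =>
      isClosed_iInter fun _ => IsClosed.preimage ((hFc p).dist (hFc q)) isClosed_Iic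
  have hcover : ∀ k, (⋃ n, A k n) = Set.univ := by
    intro k
    ext x
    simp only [Set.mem_iUnion, Set.mem_univ, iff_true]
    have hc : CauchySeq fun n => F n x := (hFt x).cauchySeq
    have hpos : (0 : ℝ) < 1 / (k + 1) := by positivity
    obtain ⟨N, hN⟩ := Metric.cauchySeq_iff.mp hc _ hpos
    exact ⟨N, fun p q hp hq => (hN p hp q hq).le⟩
  have hGdense : ∀ k, Dense (⋃ n, interior (A k n)) := fun k =>
    dense_iUnion_interior_of_closed (hAclosed k) (hcover k)
  have hGopen : ∀ k, IsOpen (⋃ n, interior (A k n)) :=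
    fun k => isOpen_iUnion fun n => isOpen_interior
  have hdense : Dense (⋂ k, ⋃ n, interior (A k n)) :=
    dense_iInter_of_isOpen hGopen hGdense
  obtain ⟨x₀, hx₀⟩ := hdense.nonempty
  refine ⟨x₀, ?_⟩
  rw [ContinuousAt, Metric.tendsto_nhds]
  intro ε hε
  obtain ⟨k, hk⟩ := exists_nat_one_div_lt (show (0:ℝ) < ε / 4 by linarith)
  have hx₀k := Set.mem_iInter.mp hx₀ k
  obtain ⟨n, hn⟩ := Set.mem_iUnion.mp hx₀k
  set δ : ℝ := 1 / (k + 1) with hδ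
  have hδε : δ < ε / 4 := hk
  have key : ∀ y ∈ A k n, dist (f y) (F n y) ≤ δ := by
    intro y hy
    have htd : Tendsto (fun q => dist (F q y) (F n y)) atTop (𝓝 (dist (f y) (F n y))) :=
      (hFt y).dist tendsto_const_nhds
    exact le_of_tendsto htd (eventually_atTop.2 ⟨n, fun q hq => hy q n hq le_rfl⟩)
  have hx₀A : x₀ ∈ A k n := interior_subset hn
  have hFn : ∀ᶠ y in 𝓝 x₀, dist (F n y) (F n x₀) < δ := by
    have := (hFc n).continuousAt (x := x₀)
    rw [ContinuousAt, Metric.tendsto_nhds] at this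
    exact this δ (by positivity)
  have hnear : ∀ᶠ y in 𝓝 x₀, y ∈ interior (A k n) :=
    isOpen_interior.eventually_mem hn
  filter_upwards [hFn, hnear] with y h1 h2
  have hyA : y ∈ A k n := interior_subset h2
  calc dist (f y) (f x₀) ≤ dist (f y) (F n y) + dist (F n y) (F n x₀) + dist (F n x₀) (f x₀) :=
        dist_triangle4 _ _ _ _
    _ ≤ δ + δ + δ := by
        have h3 := key y hyA
        have h4 := key x₀ hx₀A
        rw [dist_comm (F n x₀) (f x₀)]
        linarith
    _ < ε := by linarith


private def scheme {Y : Type*} (U₀ : Set Y) (pick : Set Y → Set Y × Set Y) :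
    List Bool → Set Y
  | [] => U₀
  | b :: s => cond b (pick (scheme U₀ pick s)).2 (pick (scheme U₀ pick s)).1

private def preList (y : ℕ → Bool) : ℕ → List Bool
  | 0 => []
  | n + 1 => y n :: preList y n

private lemma preList_len (y : ℕ → Bool) : ∀ n, (preList y n).length = n := by
  intro n; induction n with
  | zero => rfl
  | succ m ih => simp [preList, ih]

private lemma preList_congr {y y' : ℕ → Bool} : ∀ n, (∀ m < n, y m = y' m) →
    preList y n = preList y' n := by
  intro n
  induction n with
  | zero => intro _; rfl
  | succ m ih =>
    intro hm
    simp only [preList]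
    rw [hm m (Nat.lt_succ_self m), ih (fun k hk => hm k (hk.trans (Nat.lt_succ_self m)))]

lemma key_aux {Y : Type*} [TopologicalSpace Y] [T2Space Y] [LocallyCompactSpace Y]
    [Nonempty Y] (hcr : ∀ U : Set Y, IsOpen U → ∀ y ∈ U, ∃ z ∈ U, z ≠ y) :
    ∃ C E : Set Y, IsClosed C ∧ C.Nonempty ∧ E ⊆ C ∧
      (∀ W, IsOpen W → (W ∩ C).Nonempty → (W ∩ E).Nonempty) ∧
      (∀ W, IsOpen W → (W ∩ C).Nonempty → (W ∩ (C \ E)).Nonempty) := by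
  classical
  -- splitting lemma
  have split : ∀ U : Set Y, ∃ p : Set Y × Set Y,
      IsOpen U → U.Nonempty →
        IsOpen p.1 ∧ IsOpen p.2 ∧ p.1.Nonempty ∧ p.2.Nonempty ∧
          closure p.1 ⊆ U ∧ closure p.2 ⊆ U ∧ Disjoint (closure p.1) (closure p.2) := by
    intro U
    by_cases hU : IsOpen U ∧ U.Nonempty
    · obtain ⟨hUo, y, hy⟩ := hU
      obtain ⟨z, hzU, hzy⟩ := hcr U hUo y hy
      obtain ⟨Wz, Wy, hWzo, hWyo, hzW, hyW, hdisj⟩ := t2_separation hzy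
      have h1 : U ∩ Wy ∈ 𝓝 y := (hUo.inter hWyo).mem_nhds ⟨hy, hyW⟩
      obtain ⟨t1, ht1n, ht1c, ht1s⟩ := exists_mem_nhds_isClosed_subset h1
      have h2 : U ∩ Wz ∈ 𝓝 z := (hUo.inter hWzo).mem_nhds ⟨hzU, hzW⟩
      obtain ⟨t2, ht2n, ht2c, ht2s⟩ := exists_mem_nhds_isClosed_subset h2
      refine ⟨(interior t1, interior t2), fun _ _ => ?_⟩
      have hc1 : closure (interior t1) ⊆ t1 := closure_minimal interior_subset ht1c
      have hc2 : closure (interior t2) ⊆ t2 := closure_minimal interior_subset ht2c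
      refine ⟨isOpen_interior, isOpen_interior, ⟨y, mem_interior_iff_mem_nhds.2 ht1n⟩,
        ⟨z, mem_interior_iff_mem_nhds.2 ht2n⟩,
        hc1.trans (ht1s.trans Set.inter_subset_left),
        hc2.trans (ht2s.trans Set.inter_subset_left), ?_⟩
      exact hdisj.symm.mono (hc1.trans (ht1s.trans Set.inter_subset_right))
        (hc2.trans (ht2s.trans Set.inter_subset_right))
    · exact ⟨(∅, ∅), fun h1 h2 => absurd ⟨h1, h2⟩ hU⟩
  choose pick hpick using split
  -- base open set with compact closure
  obtain ⟨y₀⟩ := ‹Nonempty Y›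
  obtain ⟨K, hKc, hKn⟩ := exists_compact_mem_nhds y₀
  set U₀ := interior K with hU₀
  have hU₀o : IsOpen U₀ := isOpen_interior
  have hU₀n : U₀.Nonempty := ⟨y₀, mem_interior_iff_mem_nhds.2 hKn⟩
  have hU₀cl : IsCompact (closure U₀) :=
    hKc.of_isClosed_subset isClosed_closure (closure_minimal interior_subset hKc.isClosed)
  set V : List Bool → Set Y := scheme U₀ pick with hV
  have hVcons : ∀ (b : Bool) (s : List Bool),
      V (b :: s) = cond b (pick (V s)).2 (pick (V s)).1 := fun b s => rfl
  have hVon : ∀ s, IsOpen (V s) ∧ (V s).Nonempty := by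
    intro s
    induction s with
    | nil => exact ⟨hU₀o, hU₀n⟩
    | cons b s ih =>
      have H := hpick (V s) ih.1 ih.2
      cases b
      · exact ⟨H.1, H.2.2.1⟩
      · exact ⟨H.2.1, H.2.2.2.1⟩
  have hstep : ∀ (b : Bool) (s : List Bool), closure (V (b :: s)) ⊆ V s := by
    intro b s
    have H := hpick (V s) (hVon s).1 (hVon s).2
    cases b
    · exact H.2.2.2.2.1
    · exact H.2.2.2.2.2.1
  have hdisjstep : ∀ s, Disjoint (closure (V (false :: s))) (closure (V (true :: s))) := by
    intro s
    exact (hpick (V s) (hVon s).1 (hVon s).2).2.2.2.2.2.2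
  have hVcomp : ∀ s, IsCompact (closure (V s)) := by
    intro s
    induction s with
    | nil => exact hU₀cl
    | cons b s ih =>
      exact ih.of_isClosed_subset isClosed_closure ((hstep b s).trans subset_closure)
  have hlevel : ∀ s t : List Bool, s.length = t.length → s ≠ t →
      Disjoint (closure (V s)) (closure (V t)) := by
    intro s
    induction s with
    | nil =>
      intro t hlen hne
      cases t with
      | nil => exact absurd rfl hne
      | cons c t => simp at hlen
    | cons b s ih =>
      intro t hlen hne
      cases t with
      | nil => simp at hlen
      | cons c t =>
        by_cases hst : s = t
        · subst hst
          have hbc : b ≠ c := fun hbc => hne (by rw [hbc])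
          cases b <;> cases c
          · exact absurd rfl hbc
          · exact hdisjstep s
          · exact (hdisjstep s).symm
          · exact absurd rfl hbc
        · exact (ih t (by simpa using hlen) hst).mono
            ((hstep b s).trans subset_closure) ((hstep c t).trans subset_closure)
  -- fibers
  set fib : (ℕ → Bool) → Set Y := fun y => ⋂ n, closure (V (preList y n)) with hfib
  have hfib_anti : ∀ (y : ℕ → Bool) (n : ℕ),
      closure (V (preList y (n + 1))) ⊆ closure (V (preList y n)) := by
    intro y n
    have : preList y (n + 1) = y n :: preList y n := rfl
    rw [this]
    exact (hstep _ _).trans subset_closure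
  have hfib_ne : ∀ y, (fib y).Nonempty := by
    intro y
    exact IsCompact.nonempty_iInter_of_sequence_nonempty_isCompact_isClosed _
      (hfib_anti y) (fun n => ((hVon _).2).closure) (hVcomp _) (fun n => isClosed_closure)
  have hfib_sub : ∀ y n, fib y ⊆ closure (V (preList y n)) := fun y n => Set.iInter_subset _ n
  have hfib_closed : ∀ y, IsClosed (fib y) := fun y => isClosed_iInter fun n => isClosed_closure
  have hfib_compact : ∀ y, IsCompact (fib y) := fun y =>
    (hVcomp (preList y 0)).of_isClosed_subset (hfib_closed y) (hfib_sub y 0)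
  have hfib_disj : ∀ y y' : ℕ → Bool, y ≠ y' → Disjoint (fib y) (fib y') := by
    intro y y' hne
    have hex : ∃ m, y m ≠ y' m := by
      by_contra hc; push_neg at hc; exact hne (funext hc)
    set m := Nat.find hex with hm
    have hagree : ∀ k < m, y k = y' k := fun k hk => not_not.mp (Nat.find_min hex hk)
    have hpre : preList y m = preList y' m := preList_congr m hagree
    have hdiff : preList y (m + 1) ≠ preList y' (m + 1) := by
      simp only [preList, hpre]
      intro hcon
      exact (Nat.find_spec hex) (List.head_eq_of_cons_eq hcon)
    have := hlevel _ _ (by rw [preList_len, preList_len]) hdiff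
    exact this.mono (hfib_sub y (m + 1)) (hfib_sub y' (m + 1))
  -- Zorn
  set S : Set (Set Y) := {C | IsClosed C ∧ ∀ y, (C ∩ fib y).Nonempty} with hS
  have huniv : Set.univ ∈ S := ⟨isClosed_univ, fun y => by simpa using hfib_ne y⟩
  have hlb : ∀ c ⊆ S, IsChain (· ⊆ ·) c → c.Nonempty → ∃ lb ∈ S, ∀ s ∈ c, lb ⊆ s := by
    intro c hcS hchain hcne
    haveI : Nonempty c := hcne.to_subtype
    refine ⟨⋂₀ c, ⟨isClosed_sInter fun s hs => (hcS hs).1, fun y => ?_⟩,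
      fun s hs => Set.sInter_subset_of_mem hs⟩
    have hne2 : (⋂ s : c, (↑s ∩ fib y)).Nonempty := by
      apply IsCompact.nonempty_iInter_of_directed_nonempty_isCompact_isClosed
      · intro i j
        rcases hchain.total i.2 j.2 with hij | hij
        · exact ⟨i, le_refl _, Set.inter_subset_inter_left _ hij⟩
        · exact ⟨j, Set.inter_subset_inter_left _ hij, le_refl _⟩
      · exact fun i => (hcS i.2).2 y
      · exact fun i => (hfib_compact y).of_isClosed_subset
          ((hcS i.2).1.inter (hfib_closed y)) Set.inter_subset_right
      · exact fun i => (hcS i.2).1.inter (hfib_closed y)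
    rwa [Set.sInter_eq_iInter, Set.iInter_inter]
  obtain ⟨Cm, -, hmin⟩ := zorn_superset_nonempty S hlb _ huniv
  have hCmS : Cm ∈ S := hmin.prop
  -- core density lemma
  have hcore : ∀ W : Set Y, IsOpen W → (W ∩ Cm).Nonempty → ∀ b : Bool,
      ∃ y : ℕ → Bool, (∃ N, ∀ n ≥ N, y n = b) ∧ (Cm ∩ fib y).Nonempty ∧ Cm ∩ fib y ⊆ W := by
    intro W hWo hWCm b
    have hnotS : Cm \ W ∉ S := by
      intro hmem
      have := hmin.2 hmem Set.diff_subset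
      obtain ⟨x, hxW, hxC⟩ := hWCm
      exact (this hxC).2 hxW
    have hex : ∃ ys : ℕ → Bool, (Cm \ W) ∩ fib ys = ∅ := by
      by_contra hc; push_neg at hc
      refine hnotS ⟨?_, fun y => hc y⟩
      rw [Set.diff_eq]
      exact hCmS.1.inter hWo.isClosed_compl
    obtain ⟨ys, hys⟩ := hex
    have hsubW : Cm ∩ fib ys ⊆ W := by
      rintro x ⟨hxC, hxf⟩
      by_contra hxW
      have : x ∈ (Cm \ W) ∩ fib ys := ⟨⟨hxC, hxW⟩, hxf⟩
      rw [hys] at this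
      exact this
    have hKn : ∃ n, Cm ∩ closure (V (preList ys n)) ⊆ W := by
      by_contra hc; push_neg at hc
      have hne3 : ∀ n, ((Cm ∩ closure (V (preList ys n))) \ W).Nonempty := by
        intro n
        obtain ⟨x, hx1, hx2⟩ := Set.not_subset.1 (hc n)
        exact ⟨x, hx1, hx2⟩
      have hcl : ∀ n, IsClosed ((Cm ∩ closure (V (preList ys n))) \ W) := by
        intro n
        rw [Set.diff_eq]
        exact (hCmS.1.inter isClosed_closure).inter hWo.isClosed_compl
      have hnonempty := IsCompact.nonempty_iInter_of_sequence_nonempty_isCompact_isClosed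
        (fun n => (Cm ∩ closure (V (preList ys n))) \ W)
        (fun n => Set.diff_subset_diff_left
          (Set.inter_subset_inter_right _ (hfib_anti ys n)))
        hne3
        ((hVcomp _).of_isClosed_subset (hcl 0)
          (Set.diff_subset.trans Set.inter_subset_right))
        hcl
      obtain ⟨x, hx⟩ := hnonempty
      simp only [Set.mem_iInter, Set.mem_diff, Set.mem_inter_iff] at hx
      have hxfib : x ∈ fib ys := Set.mem_iInter.2 fun n => (hx n).1.2
      exact (hx 0).2 (hsubW ⟨(hx 0).1.1, hxfib⟩)
    obtain ⟨n, hn⟩ := hKn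
    set y : ℕ → Bool := fun m => if m < n then ys m else b with hy
    have hagree : preList y n = preList ys n :=
      preList_congr n (fun m hm => if_pos hm)
    refine ⟨y, ⟨n, fun m hm => if_neg (by omega)⟩, hCmS.2 y, ?_⟩
    rintro x ⟨hx1, hx2⟩
    exact hn ⟨hx1, hagree ▸ hfib_sub y n hx2⟩
  -- conclude
  set E : Set Y := ⋃ (y : ℕ → Bool) (_ : ∃ N, ∀ n ≥ N, y n = false), Cm ∩ fib y with hE
  have hECm : E ⊆ Cm := by
    intro x hx
    simp only [hE, Set.mem_iUnion] at hx
    obtain ⟨y, -, hx1, -⟩ := hx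
    exact hx1
  refine ⟨Cm, E, hCmS.1, ?_, hECm, ?_, ?_⟩
  · obtain ⟨x, hx, -⟩ := hCmS.2 (fun _ => false)
    exact ⟨x, hx⟩
  · intro W hWo hWC
    obtain ⟨y, hyev, ⟨x, hx⟩, hysub⟩ := hcore W hWo (by
      obtain ⟨x, h1, h2⟩ := hWC; exact ⟨x, h1, h2⟩) false
    refine ⟨x, hysub hx, ?_⟩
    simp only [hE, Set.mem_iUnion]
    exact ⟨y, hyev, hx⟩
  · intro W hWo hWC
    obtain ⟨y, hyev, ⟨x, hx⟩, hysub⟩ := hcore W hWo (by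
      obtain ⟨x, h1, h2⟩ := hWC; exact ⟨x, h1, h2⟩) true
    refine ⟨x, hysub hx, hx.1, ?_⟩
    intro hxE
    simp only [hE, Set.mem_iUnion] at hxE
    obtain ⟨y', hy'ev, -, hxf⟩ := hxE
    have hyy' : y ≠ y' := by
      obtain ⟨N, hN⟩ := hyev
      obtain ⟨N', hN'⟩ := hy'ev
      intro hq
      have e1 := hN (max N N') (le_max_left _ _)
      have e2 := hN' (max N N') (le_max_right _ _)
      rw [hq] at e1
      rw [e1] at e2
      exact Bool.noConfusion e2
    exact Set.disjoint_left.mp (hfib_disj y y' hyy') hx.2 hxf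

lemma isBaireOne_restrict {Y : Type*} [TopologicalSpace Y] {f : Y → ℝ}
    (hf : IsBaireOne f) (C : Set Y) : IsBaireOne (fun z : C => f ↑z) := by
  obtain ⟨F, hFc, hFt⟩ := hf
  exact ⟨fun n z => F n ↑z, fun n => (hFc n).comp continuous_subtype_val, fun z => hFt ↑z⟩

theorem stmt_15 {X : Type*} [TopologicalSpace X] (A : Set X) (hne : A.Nonempty)
    (hnwd : IsNowhereDense A) (hperf : Perfect A) (hlc : LocallyCompactSpace A) :
    ∃ f : X → ℝ, (∃ D : Set X, IsOpen D ∧ Dense D ∧ ContinuousOn f D) ∧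
      ¬ IsBaireOne f := by
  classical
  by_cases h : ∀ g : ↥A → ℝ, IsBaireOne g
  · exfalso
    haveI : Nonempty ↥A := hne.to_subtype
    haveI hT2 : T2Space ↥A := by
      constructor
      intro a b hab
      obtain ⟨F, hFc, hFt⟩ := h (Set.indicator {a} fun _ => (1 : ℝ))
      have h1 : Tendsto (fun n => F n a) atTop (𝓝 1) := by
        simpa [Set.indicator_apply] using hFt a
      have h0 : Tendsto (fun n => F n b) atTop (𝓝 0) := by
        have hba : b ≠ a := hab.symm
        simpa [Set.indicator_apply, hba] using hFt b
      have hex : ∃ n, F n a ≠ F n b := by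
        by_contra hc
        push_neg at hc
        have : (1 : ℝ) = 0 := tendsto_nhds_unique (by simpa [hc] using h1) h0
        norm_num at this
      obtain ⟨n, hn⟩ := hex
      obtain ⟨u, v, huo, hvo, hau, hbv, huv⟩ := t2_separation hn
      exact ⟨F n ⁻¹' u, F n ⁻¹' v, huo.preimage (hFc n), hvo.preimage (hFc n), hau, hbv,
        huv.preimage _⟩
    have hcr : ∀ U : Set ↥A, IsOpen U → ∀ y ∈ U, ∃ z ∈ U, z ≠ y := by
      intro U hUo y hy
      obtain ⟨O, hOo, hOU⟩ := isOpen_induced_iff.mp hUo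
      have hacc : AccPt (↑y : X) (𝓟 A) := hperf.acc ↑y y.2
      have hOn : O ∈ 𝓝 (↑y : X) := hOo.mem_nhds (by rw [← hOU] at hy; exact hy)
      obtain ⟨x', ⟨hx'O, hx'A⟩, hx'ne⟩ := accPt_iff_nhds.mp hacc O hOn
      refine ⟨⟨x', hx'A⟩, ?_, ?_⟩
      · rw [← hOU]; exact hx'O
      · intro hz
        exact hx'ne (congrArg Subtype.val hz)
    obtain ⟨C, E, hCcl, hCne, hEC, hdE, hdCE⟩ := key_aux hcr
    haveI : LocallyCompactSpace ↥C := hCcl.locallyCompactSpace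
    haveI : Nonempty ↥C := hCne.to_subtype
    set g : ↥A → ℝ := E.indicator fun _ => 1 with hg
    obtain ⟨z₀, hz₀⟩ := exists_continuousAt_of_isBaireOne (isBaireOne_restrict (h g) C)
    have hev : ∀ᶠ z : ↥C in 𝓝 z₀, dist (g ↑z) (g ↑z₀) < 1 / 2 := by
      rw [ContinuousAt, Metric.tendsto_nhds] at hz₀
      exact hz₀ _ (by norm_num)
    rw [nhds_induced] at hev
    obtain ⟨t, htn, hts⟩ := mem_comap.mp hev
    have hWC : ((interior t) ∩ C).Nonempty := ⟨↑z₀, mem_interior_iff_mem_nhds.2 htn, z₀.2⟩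
    obtain ⟨x₁, hx₁W, hx₁E⟩ := hdE (interior t) isOpen_interior hWC
    obtain ⟨x₂, hx₂W, hx₂C, hx₂E⟩ := hdCE (interior t) isOpen_interior hWC
    have hm1 : (⟨x₁, hEC hx₁E⟩ : ↥C) ∈ Subtype.val ⁻¹' t := Set.mem_preimage.mpr (interior_subset hx₁W)
    have hm2 : (⟨x₂, hx₂C⟩ : ↥C) ∈ Subtype.val ⁻¹' t := Set.mem_preimage.mpr (interior_subset hx₂W)
    have h1 : dist (g x₁) (g ↑z₀) < 1 / 2 := hts hm1
    have h2 : dist (g x₂) (g ↑z₀) < 1 / 2 := hts hm2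
    have e1 : g x₁ = 1 := Set.indicator_of_mem hx₁E _
    have e2 : g x₂ = 0 := Set.indicator_of_notMem hx₂E _
    rw [e1] at h1
    rw [e2] at h2
    have htri : dist (1 : ℝ) 0 ≤ dist (1 : ℝ) (g ↑z₀) + dist (g ↑z₀) 0 := dist_triangle _ _ _
    rw [dist_comm (g ↑z₀) 0] at htri
    have : dist (1 : ℝ) 0 = 1 := by simp
    linarith
  · push_neg at h
    obtain ⟨g, hg⟩ := h
    refine ⟨fun x => if hx : x ∈ A then g ⟨x, hx⟩ else 0, ⟨Aᶜ, ?_, ?_, ?_⟩, ?_⟩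
    · exact hperf.closed.isOpen_compl
    · rw [← interior_eq_empty_iff_dense_compl]
      exact Set.eq_empty_of_subset_empty
        ((interior_mono subset_closure).trans (le_of_eq hnwd))
    · refine ContinuousOn.congr (continuousOn_const (c := (0 : ℝ))) (fun x hx => ?_)
      exact dif_neg hx
    · rintro ⟨F, hFc, hFt⟩
      apply hg
      refine ⟨fun n a => F n ↑a, fun n => (hFc n).comp continuous_subtype_val, fun a => ?_⟩
      have := hFt ↑a
      simpa [dif_pos a.2] using this
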